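/- Let k ≥ 2 and 1 ≤ r ≤ k be integers. Then Σ_{s | gcd(k,r)} C(k/s, r/s) · μ(s) ≡ 0 (mod k), where the sum is over all positive divisors s of gcd(k,r), C(·,·) denotes the binomial coefficient, and μ is the Möbius function. -/

import Mathlib

open Finset

namespace SCM

set_option linter.unusedSectionVars false

variable {k : ℕ} [NeZero k]

/-- shift a subset of `ZMod k` by `c`. -/
def shift (c : ZMod k) (A : Finset (ZMod k)) : Finset (ZMod k) := A.image (· + c)

lemma mem_shift {c x : ZMod k} {A : Finset (ZMod k)} : x ∈ shift c A ↔ x - c ∈ A := by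
  simp only [shift, mem_image]
  constructor
  · rintro ⟨y, hy, rfl⟩; simpa using hy
  · intro h; exact ⟨x - c, h, by ring⟩

lemma card_shift (c : ZMod k) (A : Finset (ZMod k)) : (shift c A).card = A.card :=
  Finset.card_image_of_injective _ (add_left_injective c)

lemma shift_zero (A : Finset (ZMod k)) : shift 0 A = A := by
  simp [shift]

lemma shift_shift (c c' : ZMod k) (A : Finset (ZMod k)) :
    shift c' (shift c A) = shift (c + c') A := by
  simp only [shift, Finset.image_image]
  apply Finset.image_congr
  intro x _
  simp [add_assoc]

def Inv (c : ZMod k) (A : Finset (ZMod k)) : Prop := shift c A = A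

instance (c : ZMod k) (A : Finset (ZMod k)) : Decidable (Inv c A) :=
  decidable_of_iff (shift c A = A) Iff.rfl

lemma inv_zero (A : Finset (ZMod k)) : Inv 0 A := shift_zero A

lemma Inv.mem_iff {c : ZMod k} {A : Finset (ZMod k)} (h : Inv c A) {x : ZMod k} :
    x + c ∈ A ↔ x ∈ A := by
  conv_lhs => rw [← h]
  rw [mem_shift]
  simp

lemma Inv.add {c c' : ZMod k} {A : Finset (ZMod k)} (h : Inv c A) (h' : Inv c' A) :
    Inv (c + c') A := by
  unfold Inv at *
  rw [← shift_shift, h, h']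

lemma Inv.natmul {c : ZMod k} {A : Finset (ZMod k)} (h : Inv c A) (n : ℕ) :
    Inv ((n : ZMod k) * c) A := by
  induction n with
  | zero => simpa using inv_zero A
  | succ m ih =>
      have h2 := ih.add h
      have : ((m : ZMod k) * c + c) = ((m + 1 : ℕ) : ZMod k) * c := by push_cast; ring
      rwa [this] at h2

/-- Fibers of `val % d` each have `k / d` elements. -/
lemma card_filter_val_mod {d j : ℕ} (hd : d ∣ k) (hj : j < d) :
    (univ.filter fun x : ZMod k => x.val % d = j).card = k / d := by
  have hk0 : 0 < k := Nat.pos_of_ne_zero (NeZero.ne k)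
  have hd0 : 0 < d := Nat.pos_of_dvd_of_pos hd hk0
  rw [← Finset.card_range (k / d)]
  apply Finset.card_bij' (fun x _ => x.val / d)
      (fun i _ => ((j + i * d : ℕ) : ZMod k))
  · intro x hx
    simp only [mem_filter, mem_univ, true_and] at hx
    simp only [mem_range]
    rw [Nat.div_lt_iff_lt_mul hd0, Nat.div_mul_cancel hd]
    exact x.val_lt
  · intro i hi
    simp only [mem_range] at hi
    have hlt : j + i * d < k := by
      have : i + 1 ≤ k / d := hi
      have h2 : (i + 1) * d ≤ (k / d) * d := Nat.mul_le_mul_right d this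
      rw [Nat.div_mul_cancel hd] at h2
      calc j + i * d < d + i * d := by omega
        _ = (i + 1) * d := by ring
        _ ≤ k := h2
    simp only [mem_filter, mem_univ, true_and]
    rw [ZMod.val_natCast, Nat.mod_eq_of_lt hlt, Nat.add_mul_mod_self_right,
      Nat.mod_eq_of_lt hj]
  · intro x hx
    simp only [mem_filter, mem_univ, true_and] at hx
    rw [← hx, Nat.mod_add_div']
    exact ZMod.natCast_rightInverse x
  · intro i hi
    simp only [mem_range] at hi
    have hlt : j + i * d < k := by
      have h2 : (i + 1) * d ≤ (k / d) * d := Nat.mul_le_mul_right d hi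
      rw [Nat.div_mul_cancel hd] at h2
      calc j + i * d < d + i * d := by omega
        _ = (i + 1) * d := by ring
        _ ≤ k := h2
    rw [ZMod.val_natCast, Nat.mod_eq_of_lt hlt, Nat.add_mul_div_right _ _ hd0,
      Nat.div_eq_of_lt hj, Nat.zero_add]

lemma card_filter_dvd_val {m : ℕ} (hm : m ∣ k) :
    (univ.filter fun x : ZMod k => m ∣ x.val).card = k / m := by
  have hk0 : 0 < k := Nat.pos_of_ne_zero (NeZero.ne k)
  have hm0 : 0 < m := Nat.pos_of_dvd_of_pos hm hk0
  rw [← card_filter_val_mod hm hm0]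
  congr 1
  ext x
  simp [Nat.dvd_iff_mod_eq_zero]

lemma inv_of_mem {c : ZMod k} {A : Finset (ZMod k)} (h : ∀ x ∈ A, x + c ∈ A) :
    Inv c A := by
  refine Finset.eq_of_subset_of_card_le ?_ (le_of_eq (card_shift c A).symm)
  intro y hy
  rw [mem_shift] at hy
  have := h _ hy
  simpa using this

lemma Inv.mem_mod {d : ℕ} (hd : d ∣ k) {A : Finset (ZMod k)}
    (h : Inv ((d : ℕ) : ZMod k) A) (x : ZMod k) :
    x ∈ A ↔ ((x.val % d : ℕ) : ZMod k) ∈ A := by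
  have hx : ((x.val % d : ℕ) : ZMod k) + ((x.val / d : ℕ) : ZMod k) * ((d : ℕ) : ZMod k)
      = x := by
    push_cast
    rw [← Nat.cast_mul, ← Nat.cast_add, Nat.mod_add_div']
    exact ZMod.natCast_rightInverse x
  have h2 := (h.natmul (x.val / d)).mem_iff (x := ((x.val % d : ℕ) : ZMod k))
  rw [hx] at h2
  exact h2

/-- The set of residues `j < d` whose class is contained in `A`. -/
def Bset (d : ℕ) (A : Finset (ZMod k)) : Finset ℕ :=
  (range d).filter fun j => ((j : ℕ) : ZMod k) ∈ A

/-- The invariant set built from a set of residues. -/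
def Phi (d : ℕ) (B : Finset ℕ) : Finset (ZMod k) :=
  univ.filter fun x => x.val % d ∈ B

lemma card_of_inv {d : ℕ} (hd : d ∣ k) {A : Finset (ZMod k)}
    (h : Inv ((d : ℕ) : ZMod k) A) : A.card = (Bset d A).card * (k / d) := by
  have hk0 : 0 < k := Nat.pos_of_ne_zero (NeZero.ne k)
  have hd0 : 0 < d := Nat.pos_of_dvd_of_pos hd hk0
  rw [Finset.card_eq_sum_card_fiberwise (f := fun x : ZMod k => x.val % d)
    (t := Bset d A) (fun x hx => by
      simp only [Bset, Finset.mem_coe, mem_filter, mem_range]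
      exact ⟨Nat.mod_lt _ hd0, ((h.mem_mod hd x).mp hx)⟩)]
  rw [Finset.sum_congr rfl (fun j hj => ?_), Finset.sum_const, smul_eq_mul]
  have hjB : ((j : ℕ) : ZMod k) ∈ A := (Finset.mem_filter.mp hj).2
  have hjd : j < d := Finset.mem_range.mp (Finset.mem_filter.mp hj).1
  have : A.filter (fun x => x.val % d = j) = univ.filter (fun x : ZMod k => x.val % d = j) := by
    ext x
    simp only [mem_filter, mem_univ, true_and]
    constructor
    · exact fun hx => hx.2
    · intro hx
      refine ⟨?_, hx⟩
      rw [h.mem_mod hd x, hx]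
      exact hjB
  rw [this, card_filter_val_mod hd hjd]

lemma val_add_d_mod {d : ℕ} (hd : d ∣ k) (x : ZMod k) :
    (x + ((d : ℕ) : ZMod k)).val % d = x.val % d := by
  have hk0 : 0 < k := Nat.pos_of_ne_zero (NeZero.ne k)
  have hd0 : 0 < d := Nat.pos_of_dvd_of_pos hd hk0
  rw [ZMod.val_add, Nat.mod_mod_of_dvd _ hd, ZMod.val_natCast]
  have hdk : d ∣ d % k := (Nat.dvd_mod_iff hd).mpr dvd_rfl
  obtain ⟨t, ht⟩ := hdk
  rw [ht, Nat.add_mul_mod_self_left]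

lemma inv_Phi {d : ℕ} (hd : d ∣ k) (B : Finset ℕ) : Inv ((d : ℕ) : ZMod k) (Phi d B) := by
  apply inv_of_mem
  intro x hx
  simp only [Phi, mem_filter, mem_univ, true_and] at hx ⊢
  rw [val_add_d_mod hd]
  exact hx

lemma card_Phi {d : ℕ} (hd : d ∣ k) {B : Finset ℕ} (hB : B ⊆ range d) :
    (Phi d B : Finset (ZMod k)).card = B.card * (k / d) := by
  rw [Finset.card_eq_sum_card_fiberwise (f := fun x : ZMod k => x.val % d)
    (t := B) (fun x hx => by
      simp only [Phi, Finset.mem_coe, mem_filter, mem_univ, true_and] at hx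
      exact hx)]
  rw [Finset.sum_congr rfl (fun j hj => ?_), Finset.sum_const, smul_eq_mul]
  have hjd : j < d := Finset.mem_range.mp (hB hj)
  have : (Phi d B).filter (fun x : ZMod k => x.val % d = j)
      = univ.filter (fun x : ZMod k => x.val % d = j) := by
    ext x
    simp only [Phi, mem_filter, mem_univ, true_and]
    constructor
    · exact fun hx => hx.2
    · intro hx
      exact ⟨hx ▸ hj, hx⟩
  rw [this, card_filter_val_mod hd hjd]

lemma Bset_Phi {d : ℕ} (hd : d ∣ k) {B : Finset ℕ} (hB : B ⊆ range d) :
    Bset d (Phi d B : Finset (ZMod k)) = B := by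
  have hk0 : 0 < k := Nat.pos_of_ne_zero (NeZero.ne k)
  have hdk : d ≤ k := Nat.le_of_dvd hk0 hd
  ext j
  simp only [Bset, Phi, mem_filter, mem_range, mem_univ, true_and]
  constructor
  · rintro ⟨hjd, hj⟩
    rwa [ZMod.val_natCast, Nat.mod_eq_of_lt (lt_of_lt_of_le hjd hdk),
      Nat.mod_eq_of_lt hjd] at hj
  · intro hj
    have hjd : j < d := Finset.mem_range.mp (hB hj)
    refine ⟨hjd, ?_⟩
    rwa [ZMod.val_natCast, Nat.mod_eq_of_lt (lt_of_lt_of_le hjd hdk),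
      Nat.mod_eq_of_lt hjd]

lemma Phi_Bset {d : ℕ} (hd : d ∣ k) {A : Finset (ZMod k)}
    (h : Inv ((d : ℕ) : ZMod k) A) : Phi d (Bset d A) = A := by
  have hk0 : 0 < k := Nat.pos_of_ne_zero (NeZero.ne k)
  have hd0 : 0 < d := Nat.pos_of_dvd_of_pos hd hk0
  ext x
  simp only [Phi, Bset, mem_filter, mem_range, mem_univ, true_and]
  constructor
  · rintro ⟨_, hx⟩
    exact (h.mem_mod hd x).mpr hx
  · intro hx
    exact ⟨Nat.mod_lt _ hd0, (h.mem_mod hd x).mp hx⟩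

/-- Counting lemma: subsets of size `r` invariant under adding `d` (for `d ∣ k`,
`(k/d) ∣ r`) are counted by `C(d, r/(k/d))`. -/
lemma card_filter_inv {d : ℕ} (hd : d ∣ k) {r : ℕ} (hr : (k / d) ∣ r) :
    (univ.filter fun A : Finset (ZMod k) => A.card = r ∧ Inv ((d : ℕ) : ZMod k) A).card
      = d.choose (r / (k / d)) := by
  have hk0 : 0 < k := Nat.pos_of_ne_zero (NeZero.ne k)
  have hd0 : 0 < d := Nat.pos_of_dvd_of_pos hd hk0
  have he0 : 0 < k / d := Nat.div_pos (Nat.le_of_dvd hk0 hd) hd0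
  have hpc : (Finset.powersetCard (r / (k / d)) (range d)).card = d.choose (r / (k / d)) := by
    rw [Finset.card_powersetCard, Finset.card_range]
  rw [← hpc]
  refine Finset.card_bij' (fun A _ => Bset d A) (fun B _ => Phi d B) ?hi ?hj ?li ?ri
  case hi =>
    intro A hA
    simp only [mem_filter, mem_univ, true_and] at hA
    obtain ⟨hcard, hinv⟩ := hA
    rw [Finset.mem_powersetCard]
    refine ⟨Finset.filter_subset _ _, ?_⟩
    have h3 := card_of_inv hd hinv
    rw [hcard] at h3
    show (Bset d A).card = r / (k / d)
    rw [h3, Nat.mul_div_cancel _ he0]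
  case hj =>
    intro B hB
    rw [Finset.mem_powersetCard] at hB
    obtain ⟨hBsub, hBcard⟩ := hB
    simp only [mem_filter, mem_univ, true_and]
    refine ⟨?_, inv_Phi hd B⟩
    rw [card_Phi hd hBsub, hBcard, Nat.div_mul_cancel hr]
  case li =>
    intro A hA
    simp only [mem_filter, mem_univ, true_and] at hA
    exact Phi_Bset hd hA.2
  case ri =>
    intro B hB
    rw [Finset.mem_powersetCard] at hB
    exact Bset_Phi hd hB.1

/-- The stabilizer of `A` as a finset. -/
def St (A : Finset (ZMod k)) : Finset (ZMod k) := univ.filter fun c => Inv c A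

lemma zero_mem_St (A : Finset (ZMod k)) : 0 ∈ St A := by
  simp [St, inv_zero]

lemma add_mem_St {A : Finset (ZMod k)} {c c' : ZMod k} (h : c ∈ St A) (h' : c' ∈ St A) :
    c + c' ∈ St A := by
  simp only [St, mem_filter, mem_univ, true_and] at *
  exact h.add h'

lemma St_card_pos (A : Finset (ZMod k)) : 0 < (St A).card :=
  Finset.card_pos.mpr ⟨0, zero_mem_St A⟩

lemma st_nsmul {A : Finset (ZMod k)} {x : ZMod k} (hx : x ∈ St A) :
    (St A).card • x = 0 := by
  have hinj : ∀ a ∈ St A, ∀ b ∈ St A, x + a = x + b → a = b := by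
    intro a _ b _ h
    exact add_left_cancel h
  have himg : (St A).image (fun y => x + y) = St A := by
    apply Finset.eq_of_subset_of_card_le
    · intro z hz
      rw [Finset.mem_image] at hz
      obtain ⟨y, hy, rfl⟩ := hz
      exact add_mem_St hx hy
    · rw [Finset.card_image_of_injective _ (add_right_injective x)]
  have h1 : ∑ y ∈ St A, y = ∑ y ∈ St A, (x + y) := by
    conv_lhs => rw [← himg, Finset.sum_image hinj]
  rw [Finset.sum_add_distrib, Finset.sum_const] at h1
  exact right_eq_add.mp h1

lemma St_eq (A : Finset (ZMod k)) :
    (St A).card ∣ k ∧ St A = univ.filter fun x : ZMod k => (k / (St A).card) ∣ x.val := by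
  have hk0 : 0 < k := Nat.pos_of_ne_zero (NeZero.ne k)
  set s := (St A).card with hs
  have hs0 : 0 < s := St_card_pos A
  set g1 := Nat.gcd k s with hg1
  have hg1k : g1 ∣ k := Nat.gcd_dvd_left _ _
  have hg1s : g1 ∣ s := Nat.gcd_dvd_right _ _
  have hg10 : 0 < g1 := Nat.gcd_pos_of_pos_left _ hk0
  have hsub : St A ⊆ univ.filter fun x : ZMod k => (k / g1) ∣ x.val := by
    intro x hx
    simp only [mem_filter, mem_univ, true_and]
    have h1 : s • x = 0 := st_nsmul hx
    have h2 : k ∣ s * x.val := by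
      have h3 : ((s * x.val : ℕ) : ZMod k) = 0 := by
        push_cast
        rw [ZMod.natCast_rightInverse x, ← nsmul_eq_mul]
        exact h1
      exact (ZMod.natCast_eq_zero_iff _ _).mp h3
    obtain ⟨t, ht⟩ := h2
    have h4 : (s / g1) * x.val = (k / g1) * t := by
      apply Nat.eq_of_mul_eq_mul_left hg10
      rw [← Nat.mul_assoc, ← Nat.mul_assoc, Nat.mul_div_cancel' hg1s,
        Nat.mul_div_cancel' hg1k, ← ht]
    have hdvd : (k / g1) ∣ (s / g1) * x.val := ⟨t, h4⟩
    have hcop : Nat.Coprime (k / g1) (s / g1) := Nat.coprime_div_gcd_div_gcd hg10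
    exact Nat.Coprime.dvd_of_dvd_mul_left hcop hdvd
  have hcardK : (univ.filter fun x : ZMod k => (k / g1) ∣ x.val).card = g1 := by
    rw [card_filter_dvd_val (Nat.div_dvd_of_dvd hg1k), Nat.div_div_self hg1k hk0.ne']
  have hsle : s ≤ g1 := by
    rw [← hcardK]
    exact Finset.card_le_card hsub
  have hle2 : g1 ≤ s := Nat.le_of_dvd hs0 hg1s
  have hgs : g1 = s := by omega
  constructor
  · rw [← hgs]; exact hg1k
  · rw [← hgs]
    exact Finset.eq_of_subset_of_card_le hsub (by rw [hcardK, hgs])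

lemma div_dvd_div_iff' {a b : ℕ} (ha : a ∣ k) (hb : b ∣ k) (ha0 : 0 < a) (hb0 : 0 < b) :
    k / a ∣ k / b ↔ b ∣ a := by
  have hk0 : 0 < k := Nat.pos_of_ne_zero (NeZero.ne k)
  have hka : 0 < k / a := Nat.div_pos (Nat.le_of_dvd hk0 ha) ha0
  calc k / a ∣ k / b ↔ (k / a) * b ∣ (k / b) * b := (Nat.mul_dvd_mul_iff_right hb0).symm
    _ ↔ (k / a) * b ∣ k := by rw [Nat.div_mul_cancel hb]
    _ ↔ (k / a) * b ∣ (k / a) * a := by rw [Nat.div_mul_cancel ha]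
    _ ↔ b ∣ a := Nat.mul_dvd_mul_iff_left hka

lemma inv_iff_dvd_card {A : Finset (ZMod k)} {e : ℕ} (he : e ∣ k) (he0 : 0 < e) :
    Inv ((k / e : ℕ) : ZMod k) A ↔ e ∣ (St A).card := by
  obtain ⟨hsk, hSt⟩ := St_eq A
  have hs0 : 0 < (St A).card := St_card_pos A
  have hmem : Inv ((k / e : ℕ) : ZMod k) A ↔ ((k / e : ℕ) : ZMod k) ∈ St A := by
    simp [St]
  rw [hmem]
  conv_lhs => rw [hSt]
  simp only [mem_filter, mem_univ, true_and]
  rw [ZMod.val_natCast, Nat.dvd_mod_iff (Nat.div_dvd_of_dvd hsk)]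
  exact div_dvd_div_iff' hsk he hs0 he0

lemma st_card_dvd_card (A : Finset (ZMod k)) : (St A).card ∣ A.card := by
  have hk0 : 0 < k := Nat.pos_of_ne_zero (NeZero.ne k)
  obtain ⟨hsk, _⟩ := St_eq A
  have hs0 : 0 < (St A).card := St_card_pos A
  have hinv : Inv ((k / (St A).card : ℕ) : ZMod k) A :=
    (inv_iff_dvd_card hsk hs0).mpr dvd_rfl
  have h := card_of_inv (Nat.div_dvd_of_dvd hsk) hinv
  rw [Nat.div_div_self hsk hk0.ne'] at h
  exact ⟨_, by rw [h, Nat.mul_comm]⟩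

lemma shift_neg_shift (c : ZMod k) (A : Finset (ZMod k)) : shift (-c) (shift c A) = A := by
  rw [shift_shift, add_neg_cancel, shift_zero]

lemma shift_left_cancel {c : ZMod k} {A B : Finset (ZMod k)} (h : shift c A = shift c B) :
    A = B := by
  have h2 := congrArg (shift (-c)) h
  rwa [shift_neg_shift, shift_neg_shift] at h2

lemma St_shift (c : ZMod k) (A : Finset (ZMod k)) : St (shift c A) = St A := by
  ext c'
  simp only [St, mem_filter, mem_univ, true_and]
  unfold Inv
  rw [shift_shift, add_comm c c', ← shift_shift]
  constructor
  · intro h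
    exact shift_left_cancel h
  · intro h
    rw [h]

lemma St_card_one_iff {A : Finset (ZMod k)} (hA : (St A).card = 1) {c : ZMod k}
    (hc : c ∈ St A) : c = 0 := by
  obtain ⟨a, ha⟩ := Finset.card_eq_one.mp hA
  have h0 : (0 : ZMod k) ∈ St A := zero_mem_St A
  rw [ha, Finset.mem_singleton] at hc h0
  rw [hc, ← h0]

lemma orbit_card {A : Finset (ZMod k)} (hA : (St A).card = 1) :
    (univ.image fun c : ZMod k => shift c A).card = k := by
  have hinj : Function.Injective (fun c : ZMod k => shift c A) := by
    intro c c' h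
    simp only at h
    have h2 : shift (c - c') A = A := by
      have h3 := congrArg (shift (-c')) h
      rw [shift_shift, shift_shift, add_neg_cancel, shift_zero] at h3
      rwa [sub_eq_add_neg]
    have hmem : c - c' ∈ St A := by
      simp only [St, mem_filter, mem_univ, true_and]
      exact h2
    have := St_card_one_iff hA hmem
    rwa [sub_eq_zero] at this
  rw [Finset.card_image_of_injective _ hinj, Finset.card_univ, ZMod.card]

lemma dvd_card_free : ∀ Y : Finset (Finset (ZMod k)),
    (∀ A ∈ Y, ∀ c : ZMod k, shift c A ∈ Y) → (∀ A ∈ Y, (St A).card = 1) → k ∣ Y.card := by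
  intro Y
  induction Y using Finset.strongInduction with
  | _ Y ih =>
    intro hcl hfree
    rcases Y.eq_empty_or_nonempty with rfl | ⟨A, hA⟩
    · simp
    · set O := univ.image fun c : ZMod k => shift c A with hO
      have hOY : O ⊆ Y := by
        intro B hB
        rw [hO, Finset.mem_image] at hB
        obtain ⟨c, _, rfl⟩ := hB
        exact hcl A hA c
      have hOcard : O.card = k := orbit_card (hfree A hA)
      have hAO : A ∈ O := by
        rw [hO, Finset.mem_image]
        exact ⟨0, mem_univ _, shift_zero A⟩
      have hss : Y \ O ⊂ Y := Finset.sdiff_ssubset hOY ⟨A, hAO⟩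
      have hcl' : ∀ A' ∈ Y \ O, ∀ c : ZMod k, shift c A' ∈ Y \ O := by
        intro A' hA' c
        rw [Finset.mem_sdiff] at hA' ⊢
        refine ⟨hcl A' hA'.1 c, ?_⟩
        intro hmem
        apply hA'.2
        rw [hO, Finset.mem_image] at hmem ⊢
        obtain ⟨c'', -, hc''⟩ := hmem
        refine ⟨c'' + -c, mem_univ _, ?_⟩
        rw [← shift_shift, hc'', shift_neg_shift]
      have hfree' : ∀ A' ∈ Y \ O, (St A').card = 1 :=
        fun A' hA' => hfree A' (Finset.mem_sdiff.mp hA').1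
      have hdvd := ih (Y \ O) hss hcl' hfree'
      have hle : O.card ≤ Y.card := Finset.card_le_card hOY
      have hcards : Y.card = (Y \ O).card + k := by
        rw [Finset.card_sdiff_of_subset hOY, hOcard]
        omega
      rw [hcards]
      exact Nat.dvd_add hdvd dvd_rfl

lemma sum_moebius_divisors (n : ℕ) :
    (∑ e ∈ n.divisors, ArithmeticFunction.moebius e) = if n = 1 then 1 else 0 := by
  rw [← ArithmeticFunction.coe_mul_zeta_apply, ArithmeticFunction.moebius_mul_coe_zeta,
    ArithmeticFunction.one_apply]

end SCM

open Finset SCM in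
/-- `∑_{s ∣ gcd(k, r)} C(k/s, r/s) · μ(s) ≡ 0 (mod k)`. -/
theorem sum_choose_moebius_cong (k r : ℕ) (hk : 2 ≤ k) (hr1 : 1 ≤ r) (hrk : r ≤ k) :
    (k : ℤ) ∣ ∑ s ∈ (Nat.gcd k r).divisors,
      ((k / s).choose (r / s) : ℤ) * ArithmeticFunction.moebius s := by
  haveI : NeZero k := ⟨by omega⟩
  have hk0 : 0 < k := by omega
  set g := Nat.gcd k r with hgdef
  have hg0 : 0 < g := Nat.gcd_pos_of_pos_left _ hk0
  set X : Finset (Finset (ZMod k)) := univ.filter (fun A => A.card = r) with hX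
  -- Step A: each binomial coefficient counts invariant subsets
  have hstep : ∀ e ∈ g.divisors, ((k / e).choose (r / e) : ℤ)
      = ((X.filter fun A => SCM.Inv ((k / e : ℕ) : ZMod k) A).card : ℤ) := by
    intro e he
    rw [Nat.mem_divisors] at he
    obtain ⟨heg, -⟩ := he
    have hek : e ∣ k := heg.trans (Nat.gcd_dvd_left _ _)
    have her : e ∣ r := heg.trans (Nat.gcd_dvd_right _ _)
    have hdk : (k / e) ∣ k := Nat.div_dvd_of_dvd hek
    have hkd : k / (k / e) = e := Nat.div_div_self hek hk0.ne'
    have hcount := SCM.card_filter_inv (k := k) hdk (r := r) (by rw [hkd]; exact her)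
    rw [hkd] at hcount
    rw [← hcount]
    congr 2
    rw [hX, Finset.filter_filter]
  rw [Finset.sum_congr rfl (fun e he => by rw [hstep e he])]
  -- Step B: swap summations
  have h1 : ∀ e : ℕ, ((X.filter fun A => SCM.Inv ((k / e : ℕ) : ZMod k) A).card : ℤ)
      = ∑ A ∈ X, if SCM.Inv ((k / e : ℕ) : ZMod k) A then (1 : ℤ) else 0 := by
    intro e
    rw [Finset.card_filter]
    push_cast
    rfl
  have hswap : ∑ e ∈ g.divisors,
        ((X.filter fun A => SCM.Inv ((k / e : ℕ) : ZMod k) A).card : ℤ)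
          * ArithmeticFunction.moebius e
      = ∑ A ∈ X, ∑ e ∈ g.divisors,
          (if SCM.Inv ((k / e : ℕ) : ZMod k) A then (1 : ℤ) else 0)
            * ArithmeticFunction.moebius e := by
    rw [Finset.sum_comm]
    apply Finset.sum_congr rfl
    intro e _
    rw [h1, Finset.sum_mul]
  rw [hswap]
  -- Step C: inner sum is the indicator of trivial stabilizer
  have hinner : ∀ A ∈ X, ∑ e ∈ g.divisors,
        (if SCM.Inv ((k / e : ℕ) : ZMod k) A then (1 : ℤ) else 0)
          * ArithmeticFunction.moebius e
      = if (SCM.St A).card = 1 then (1 : ℤ) else 0 := by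
    intro A hAX
    have hAr : A.card = r := by
      rw [hX] at hAX
      exact (Finset.mem_filter.mp hAX).2
    have hs0 : 0 < (SCM.St A).card := SCM.St_card_pos A
    obtain ⟨hsk, -⟩ := SCM.St_eq A
    have hsr : (SCM.St A).card ∣ r := hAr ▸ SCM.st_card_dvd_card A
    have hsets : g.divisors.filter (fun e => SCM.Inv ((k / e : ℕ) : ZMod k) A)
        = ((SCM.St A).card).divisors := by
      ext e
      simp only [Nat.mem_divisors, Finset.mem_filter]
      constructor
      · rintro ⟨⟨heg, -⟩, hinv⟩
        have hek : e ∣ k := heg.trans (Nat.gcd_dvd_left _ _)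
        have he0 : 0 < e := Nat.pos_of_dvd_of_pos heg hg0
        exact ⟨(SCM.inv_iff_dvd_card hek he0).mp hinv, hs0.ne'⟩
      · rintro ⟨hes, -⟩
        have he0 : 0 < e := Nat.pos_of_dvd_of_pos hes hs0
        have hek : e ∣ k := hes.trans hsk
        have her : e ∣ r := hes.trans hsr
        exact ⟨⟨Nat.dvd_gcd hek her, hg0.ne'⟩, (SCM.inv_iff_dvd_card hek he0).mpr hes⟩
    calc ∑ e ∈ g.divisors,
          (if SCM.Inv ((k / e : ℕ) : ZMod k) A then (1 : ℤ) else 0)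
            * ArithmeticFunction.moebius e
        = ∑ e ∈ g.divisors,
            if SCM.Inv ((k / e : ℕ) : ZMod k) A
              then (ArithmeticFunction.moebius e : ℤ) else 0 := by
          apply Finset.sum_congr rfl
          intro e _
          rw [ite_mul, one_mul, zero_mul]
      _ = ∑ e ∈ g.divisors.filter (fun e => SCM.Inv ((k / e : ℕ) : ZMod k) A),
            (ArithmeticFunction.moebius e : ℤ) := (Finset.sum_filter _ _).symm
      _ = ∑ e ∈ ((SCM.St A).card).divisors, (ArithmeticFunction.moebius e : ℤ) := by
          rw [hsets]
      _ = if (SCM.St A).card = 1 then (1 : ℤ) else 0 := SCM.sum_moebius_divisors _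
  rw [Finset.sum_congr rfl hinner]
  -- Step D: the aperiodic count is divisible by k
  have hbool : ∑ A ∈ X, (if (SCM.St A).card = 1 then (1 : ℤ) else 0)
      = (((X.filter fun A => (SCM.St A).card = 1)).card : ℤ) := by
    rw [Finset.sum_boole]
  rw [hbool]
  rw [Int.natCast_dvd_natCast]
  apply SCM.dvd_card_free
  · intro A hA c
    simp only [hX, Finset.mem_filter, Finset.mem_univ, true_and] at hA ⊢
    obtain ⟨hcard, hst⟩ := hA
    refine ⟨?_, ?_⟩
    · rw [SCM.card_shift, hcard]
    · rw [SCM.St_shift, hst]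
  · intro A hA
    simp only [hX, Finset.mem_filter] at hA
    exact hA.2
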